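/- (Case 1.2.1 of the social-cost analysis.) Consider a facility-location instance with |N₁| ≥ |N₂|, |N₁ \ N₂| ≥ |N₁ ∩ N₂|, and |N₂ \ N₁| ≤ |N₁ ∩ N₂|. Let m₁ be the median position of N₁ \ N₂ and m₂ the median position of N₂, and suppose t(m₂) = t(m₁), so the mechanism outputs w = (t(m₁), s(m₂)). Then for every feasible solution (y₁,y₂) with y₂ = t(m₁), one has SC(w) ≤ 7 · SC(y₁,y₂). -/

import Mathlib

open Finset

/-- The smallest element of `C` minimizing the distance to `p`. -/
noncomputable def tloc (C : Finset ℝ) (p : ℝ) : ℝ :=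
  ((C.filter fun c => ∀ c' ∈ C, |p - c| ≤ |p - c'|).min).untopD 0

/-- The smallest element of `C \ {tloc C p}` minimizing the distance to `p`. -/
noncomputable def sloc (C : Finset ℝ) (p : ℝ) : ℝ :=
  tloc (C.erase (tloc C p)) p

/-- The `⌈n/2⌉`-th smallest element of a multiset of reals (0 if empty). -/
noncomputable def medOf (l : Multiset ℝ) : ℝ :=
  (l.sort (· ≤ ·)).getD ((Multiset.card l + 1) / 2 - 1) 0

/-- The median position of the agents in `S` with positions `x`. -/
noncomputable def medianPos (S : Finset ℕ) (x : ℕ → ℝ) : ℝ :=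
  medOf (S.val.map x)

/-- The Conditional-Median mechanism, assuming facility 1 is (weakly) more popular. -/
noncomputable def condMedian (x : ℕ → ℝ) (N1 N2 : Finset ℕ) (C : Finset ℝ) : ℝ × ℝ :=
  if (N1 ∩ N2).card ≤ (N1 \ N2).card then
    let m1 := medianPos (N1 \ N2) x
    let m2 := medianPos N2 x
    let w1 := tloc C m1
    (w1, if tloc C m2 ≠ w1 then tloc C m2 else sloc C m2)
  else
    let m12 := medianPos (N1 ∩ N2) x
    (tloc C m12, sloc C m12)

/-- The output of the Conditional-Median mechanism (roles swapped if `|N₂| > |N₁|`). -/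
noncomputable def mechOutput (x : ℕ → ℝ) (N1 N2 : Finset ℕ) (C : Finset ℝ) : ℝ × ℝ :=
  if N2.card ≤ N1.card then condMedian x N1 N2 C
  else (condMedian x N2 N1 C).swap

/-- The cost of agent `i` at solution `y`: the distance to the farthest approved facility. -/
noncomputable def cost (x : ℕ → ℝ) (N1 N2 : Finset ℕ) (i : ℕ) (y : ℝ × ℝ) : ℝ :=
  if i ∈ N1 then
    if i ∈ N2 then max |x i - y.1| |x i - y.2| else |x i - y.1|
  else |x i - y.2|

/-- The social cost. -/
noncomputable def SC (x : ℕ → ℝ) (N1 N2 N : Finset ℕ) (y : ℝ × ℝ) : ℝ :=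
  ∑ i ∈ N, cost x N1 N2 i y

/-- The max cost. -/
noncomputable def MC (x : ℕ → ℝ) (N1 N2 N : Finset ℕ) (hN : N.Nonempty) (y : ℝ × ℝ) : ℝ :=
  N.sup' hN fun i => cost x N1 N2 i y


section Helpers

lemma tloc_spec (C : Finset ℝ) (hC : C.Nonempty) (p : ℝ) :
    tloc C p ∈ C ∧ ∀ c ∈ C, |p - tloc C p| ≤ |p - c| := by
  obtain ⟨c₀, hc₀, hmin⟩ := C.exists_min_image (fun c => |p - c|) hC
  have hF : (C.filter fun c => ∀ c' ∈ C, |p - c| ≤ |p - c'|).Nonempty :=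
    ⟨c₀, Finset.mem_filter.2 ⟨hc₀, hmin⟩⟩
  have ht : tloc C p = (C.filter fun c => ∀ c' ∈ C, |p - c| ≤ |p - c'|).min' hF := by
    rw [tloc, ← Finset.coe_min' hF, WithTop.untopD_coe]
  have hmem := Finset.min'_mem _ hF
  rw [Finset.mem_filter] at hmem
  rw [ht]
  exact hmem

lemma pair_abs (a b m p : ℝ) (h1 : a ≤ m) (h2 : m ≤ b) :
    |a - m| + |b - m| ≤ |a - p| + |b - p| := by
  have h3 : b - p ≤ |b - p| := le_abs_self _
  have h4 : p - a ≤ |a - p| := by rw [abs_sub_comm]; exact le_abs_self _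
  rw [abs_of_nonpos (by linarith), abs_of_nonneg (by linarith)]
  linarith

lemma sum_map_getD (l : List ℝ) (f : ℝ → ℝ) :
    (l.map f).sum = ∑ j ∈ Finset.range l.length, f (l.getD j 0) := by
  induction l with
  | nil => simp
  | cons a l ih =>
    rw [List.map_cons, List.sum_cons, List.length_cons, Finset.sum_range_succ']
    simp [ih]; ring

lemma median_list_min (l : List ℝ) (hl : l.Pairwise (· ≤ ·)) (hne : l ≠ []) (p : ℝ) :
    (l.map (fun a => |a - l.getD ((l.length + 1) / 2 - 1) 0|)).sum ≤
      (l.map (fun a => |a - p|)).sum := by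
  set n := l.length with hn
  have hn1 : 1 ≤ n := List.length_pos_iff.2 hne
  set k := (n + 1) / 2 - 1 with hk
  have hkn : k < n := by omega
  set m := l.getD k 0 with hm
  have key : ∀ j < n, |l.getD j 0 - m| + |l.getD (n - 1 - j) 0 - m| ≤
      |l.getD j 0 - p| + |l.getD (n - 1 - j) 0 - p| := by
    intro j hj
    have hj' : n - 1 - j < n := by omega
    have mono : ∀ i1 i2, (h1 : i1 < n) → (h2 : i2 < n) → i1 ≤ i2 →
        l.getD i1 0 ≤ l.getD i2 0 := by
      intro i1 i2 h1 h2 h12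
      rw [List.getD_eq_getElem _ _ (hn ▸ h1), List.getD_eq_getElem _ _ (hn ▸ h2)]
      exact List.Pairwise.rel_get_of_le hl (by exact_mod_cast h12)
    rcases le_or_gt j (n - 1 - j) with hle | hlt
    · have h1 : j ≤ k := by omega
      have h2 : k ≤ n - 1 - j := by omega
      exact pair_abs _ _ _ _ (mono j k hj hkn h1) (mono k (n-1-j) hkn hj' h2)
    · have h1 : n - 1 - j ≤ k := by omega
      have h2 : k ≤ j := by omega
      have := pair_abs (l.getD (n-1-j) 0) (l.getD j 0) m p
        (mono _ k hj' hkn h1) (mono k _ hkn hj h2)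
      linarith
  have hrefl : ∀ g : ℝ → ℝ, ∑ j ∈ Finset.range n, g (l.getD (n - 1 - j) 0)
      = ∑ j ∈ Finset.range n, g (l.getD j 0) :=
    fun g => Finset.sum_range_reflect (fun j => g (l.getD j 0)) n
  have two_le : 2 * (l.map (fun a => |a - m|)).sum ≤ 2 * (l.map (fun a => |a - p|)).sum := by
    rw [sum_map_getD, sum_map_getD]
    calc 2 * ∑ j ∈ Finset.range n, |l.getD j 0 - m|
        = ∑ j ∈ Finset.range n, (|l.getD j 0 - m| + |l.getD (n - 1 - j) 0 - m|) := by
          rw [Finset.sum_add_distrib, hrefl (fun a => |a - m|)]; ring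
      _ ≤ ∑ j ∈ Finset.range n, (|l.getD j 0 - p| + |l.getD (n - 1 - j) 0 - p|) :=
          Finset.sum_le_sum (fun j hj => key j (Finset.mem_range.1 hj))
      _ = 2 * ∑ j ∈ Finset.range n, |l.getD j 0 - p| := by
          rw [Finset.sum_add_distrib, hrefl (fun a => |a - p|)]; ring
  linarith

lemma sum_over_finset (S : Finset ℕ) (x : ℕ → ℝ) (f : ℝ → ℝ) :
    ∑ i ∈ S, f (x i) = (((S.val.map x).sort (· ≤ ·)).map f).sum := by
  rw [← Multiset.sum_coe, ← Multiset.map_coe, Multiset.sort_eq]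
  rw [Finset.sum, Multiset.map_map]; rfl

lemma median_min (S : Finset ℕ) (hS : S.Nonempty) (x : ℕ → ℝ) (p : ℝ) :
    ∑ i ∈ S, |x i - medianPos S x| ≤ ∑ i ∈ S, |x i - p| := by
  set L := (S.val.map x).sort (· ≤ ·) with hL
  have hlen : L.length = S.card := by
    rw [hL, Multiset.length_sort, Multiset.card_map]; rfl
  have hsorted : L.Pairwise (· ≤ ·) := Multiset.pairwise_sort _ _
  have hne : L ≠ [] := by
    intro h
    have := hlen
    rw [h] at this
    simp at this
    exact hS.ne_empty (Finset.card_eq_zero.1 this.symm)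
  have hmed : medianPos S x = L.getD ((L.length + 1) / 2 - 1) 0 := by
    rw [medianPos, medOf, hlen, ← hL, Multiset.card_map]; rfl
  rw [sum_over_finset S x (fun a => |a - medianPos S x|),
      sum_over_finset S x (fun a => |a - p|), ← hL, hmed]
  exact median_list_min L hsorted hne p

lemma SC_split (x : ℕ → ℝ) (N1 N2 N : Finset ℕ) (hU : N1 ∪ N2 = N) (a b : ℝ) :
    SC x N1 N2 N (a, b) =
      ∑ i ∈ N1 \ N2, |x i - a| + ∑ i ∈ N1 ∩ N2, max |x i - a| |x i - b|
        + ∑ i ∈ N2 \ N1, |x i - b| := by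
  have hN : N = (N1 \ N2) ∪ (N1 ∩ N2) ∪ (N2 \ N1) := by
    rw [← hU]; ext i
    simp only [Finset.mem_union, Finset.mem_sdiff, Finset.mem_inter]
    tauto
  have d1 : Disjoint (N1 \ N2) (N1 ∩ N2) := by
    rw [Finset.disjoint_left]; intro i hi hi2
    rw [Finset.mem_sdiff] at hi; rw [Finset.mem_inter] at hi2; exact hi.2 hi2.2
  have d2 : Disjoint ((N1 \ N2) ∪ (N1 ∩ N2)) (N2 \ N1) := by
    rw [Finset.disjoint_left]; intro i hi hi2
    rw [Finset.mem_sdiff] at hi2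
    rw [Finset.mem_union, Finset.mem_sdiff, Finset.mem_inter] at hi
    tauto
  rw [SC, hN, Finset.sum_union d2, Finset.sum_union d1]
  have e1 : ∑ i ∈ N1 \ N2, cost x N1 N2 i (a, b) = ∑ i ∈ N1 \ N2, |x i - a| :=
    Finset.sum_congr rfl fun i hi => by
      rw [Finset.mem_sdiff] at hi; simp [cost, hi.1, hi.2]
  have e2 : ∑ i ∈ N1 ∩ N2, cost x N1 N2 i (a, b)
      = ∑ i ∈ N1 ∩ N2, max |x i - a| |x i - b| :=
    Finset.sum_congr rfl fun i hi => by
      rw [Finset.mem_inter] at hi; simp [cost, hi.1, hi.2]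
  have e3 : ∑ i ∈ N2 \ N1, cost x N1 N2 i (a, b) = ∑ i ∈ N2 \ N1, |x i - b| :=
    Finset.sum_congr rfl fun i hi => by
      rw [Finset.mem_sdiff] at hi; simp [cost, hi.2]
  rw [e1, e2, e3]

end Helpers

/-- Case 1.2.1 of the social-cost analysis: when `|N₁| ≥ |N₂|`, `|N₁ \ N₂| ≥ |N₁ ∩ N₂|`,
`|N₂ \ N₁| ≤ |N₁ ∩ N₂|`, and `t(m₂) = t(m₁)`, the mechanism output `(t(m₁), s(m₂))` is
7-approximate against any feasible solution whose second facility is at `t(m₁)`. -/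
theorem case_one_two_one_seven_approx
    (N N1 N2 : Finset ℕ) (x : ℕ → ℝ) (C : Finset ℝ)
    (hN : N.Nonempty) (h1 : N1.Nonempty) (h2 : N2.Nonempty)
    (hU : N1 ∪ N2 = N) (hC : 2 ≤ C.card)
    (hcards : N2.card ≤ N1.card)
    (hcase : (N1 ∩ N2).card ≤ (N1 \ N2).card)
    (hcase2 : (N2 \ N1).card ≤ (N1 ∩ N2).card)
    (heq : tloc C (medianPos N2 x) = tloc C (medianPos (N1 \ N2) x))
    (y1 y2 : ℝ) (hy1 : y1 ∈ C) (hy2 : y2 ∈ C) (hy : y1 ≠ y2)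
    (hy2eq : y2 = tloc C (medianPos (N1 \ N2) x)) :
    SC x N1 N2 N (tloc C (medianPos (N1 \ N2) x), sloc C (medianPos N2 x)) ≤
      7 * SC x N1 N2 N (y1, y2) := by
  have hCne : C.Nonempty := Finset.card_pos.1 (by omega)
  -- cardinalities
  have hsum2 : (N2 \ N1).card + (N2 ∩ N1).card = N2.card :=
    Finset.card_sdiff_add_card_inter N2 N1
  have hIc : N2 ∩ N1 = N1 ∩ N2 := Finset.inter_comm N2 N1
  rw [hIc] at hsum2
  have hIne : (N1 ∩ N2).Nonempty := by
    rw [← Finset.card_pos]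
    by_contra h
    push_neg at h
    have h0 : (N1 ∩ N2).card = 0 := by omega
    have h1' : N2.card = 0 := by omega
    exact h2.ne_empty (Finset.card_eq_zero.1 h1')
  have hAne : (N1 \ N2).Nonempty := by
    rw [← Finset.card_pos]
    have := hIne.card_pos
    omega
  -- facility location facts
  obtain ⟨htC, htmin⟩ := tloc_spec C hCne (medianPos (N1 \ N2) x)
  have ht2min := (tloc_spec C hCne (medianPos N2 x)).2
  rw [heq] at ht2min
  have herase : (C.erase (tloc C (medianPos (N1 \ N2) x))).Nonempty := by
    rw [← Finset.card_pos, Finset.card_erase_of_mem htC]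
    omega
  obtain ⟨hsC, hsmin⟩ := tloc_spec _ herase (medianPos N2 x)
  have hsloc : sloc C (medianPos N2 x)
      = tloc (C.erase (tloc C (medianPos (N1 \ N2) x))) (medianPos N2 x) := by
    rw [sloc, heq]
  set m1 := medianPos (N1 \ N2) x with hm1
  set m2 := medianPos N2 x with hm2
  set t := tloc C m1 with ht
  set s := tloc (C.erase t) m2 with hs
  rw [hsloc]
  subst hy2eq
  have hy1e : y1 ∈ C.erase t := Finset.mem_erase.2 ⟨hy, hy1⟩
  have hmsY : |m2 - s| ≤ |m2 - y1| := hsmin y1 hy1e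
  have hm1Y : |m1 - t| ≤ |m1 - y1| := htmin y1 hy1
  rw [SC_split x N1 N2 N hU t s, SC_split x N1 N2 N hU y1 t]
  -- split the N2-sums
  have hsplit : ∀ g : ℕ → ℝ,
      ∑ i ∈ N1 ∩ N2, g i + ∑ i ∈ N2 \ N1, g i = ∑ i ∈ N2, g i := by
    intro g
    rw [← hIc]
    exact Finset.sum_inter_add_sum_sdiff N2 N1 g
  -- (1) max ≤ sum on the mechanism side
  have e1 : ∑ i ∈ N1 ∩ N2, max |x i - t| |x i - s|
      ≤ ∑ i ∈ N1 ∩ N2, |x i - t| + ∑ i ∈ N1 ∩ N2, |x i - s| := by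
    rw [← Finset.sum_add_distrib]
    exact Finset.sum_le_sum fun i _ =>
      max_le (le_add_of_nonneg_right (abs_nonneg _)) (le_add_of_nonneg_left (abs_nonneg _))
  -- (2) facility-1 sum over N1 \ N2
  have e2 : ∑ i ∈ N1 \ N2, |x i - t|
      ≤ 2 * ∑ i ∈ N1 \ N2, |x i - m1| + ∑ i ∈ N1 \ N2, |x i - y1| := by
    have hpt : ∀ i ∈ N1 \ N2, |x i - t| ≤ 2 * |x i - m1| + |x i - y1| := by
      intro i _
      have t1 : |x i - t| ≤ |x i - m1| + |m1 - t| := abs_sub_le _ _ _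
      have t2 : |m1 - y1| ≤ |m1 - x i| + |x i - y1| := abs_sub_le _ _ _
      have t3 : |m1 - x i| = |x i - m1| := abs_sub_comm _ _
      linarith
    calc ∑ i ∈ N1 \ N2, |x i - t| ≤ ∑ i ∈ N1 \ N2, (2 * |x i - m1| + |x i - y1|) :=
          Finset.sum_le_sum hpt
      _ = 2 * ∑ i ∈ N1 \ N2, |x i - m1| + ∑ i ∈ N1 \ N2, |x i - y1| := by
          rw [Finset.sum_add_distrib, Finset.mul_sum]
  have e2' : ∑ i ∈ N1 \ N2, |x i - m1| ≤ ∑ i ∈ N1 \ N2, |x i - y1| :=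
    median_min (N1 \ N2) hAne x y1
  -- (3) facility-2 sum over N2
  have e3 : ∑ i ∈ N2, |x i - s|
      ≤ ∑ i ∈ N2, |x i - m2| + (N2.card : ℝ) * |m2 - y1| := by
    have hpt : ∀ i ∈ N2, |x i - s| ≤ |x i - m2| + |m2 - y1| := by
      intro i _
      have t1 : |x i - s| ≤ |x i - m2| + |m2 - s| := abs_sub_le _ _ _
      linarith
    have h := Finset.sum_le_sum hpt
    rw [Finset.sum_add_distrib, Finset.sum_const, nsmul_eq_mul] at h
    exact h
  have e4 : (N2.card : ℝ) * |m2 - y1| ≤ 2 * ((N1 ∩ N2).card : ℝ) * |m2 - y1| := by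
    have hle : (N2.card : ℝ) ≤ 2 * ((N1 ∩ N2).card : ℝ) := by
      have : N2.card ≤ 2 * (N1 ∩ N2).card := by omega
      exact_mod_cast this
    nlinarith [abs_nonneg (m2 - y1)]
  have e5 : ((N1 ∩ N2).card : ℝ) * |m2 - y1|
      ≤ ∑ i ∈ N1 ∩ N2, |x i - m2| + ∑ i ∈ N1 ∩ N2, |x i - y1| := by
    have hpt : ∀ i ∈ N1 ∩ N2, |m2 - y1| ≤ |x i - m2| + |x i - y1| := by
      intro i _
      have t1 : |m2 - y1| ≤ |m2 - x i| + |x i - y1| := abs_sub_le _ _ _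
      have t2 : |m2 - x i| = |x i - m2| := abs_sub_comm _ _
      linarith
    calc ((N1 ∩ N2).card : ℝ) * |m2 - y1| = ∑ _i ∈ N1 ∩ N2, |m2 - y1| := by
          rw [Finset.sum_const, nsmul_eq_mul]
      _ ≤ ∑ i ∈ N1 ∩ N2, (|x i - m2| + |x i - y1|) := Finset.sum_le_sum hpt
      _ = _ := Finset.sum_add_distrib
  have e6 : ∑ i ∈ N2, |x i - m2| ≤ ∑ i ∈ N2, |x i - t| := median_min N2 h2 x t
  have e7 : ∑ i ∈ N1 ∩ N2, |x i - m2| ≤ ∑ i ∈ N2, |x i - m2| :=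
    Finset.sum_le_sum_of_subset_of_nonneg Finset.inter_subset_right
      (fun i _ _ => abs_nonneg _)
  have e8t := hsplit (fun i => |x i - t|)
  have e8s := hsplit (fun i => |x i - s|)
  -- (4) relating to the optimum's middle term
  have e9 : ∑ i ∈ N1 ∩ N2, |x i - t| ≤ ∑ i ∈ N1 ∩ N2, max |x i - y1| |x i - t| :=
    Finset.sum_le_sum fun i _ => le_max_right _ _
  have e10 : ∑ i ∈ N1 ∩ N2, |x i - y1| ≤ ∑ i ∈ N1 ∩ N2, max |x i - y1| |x i - t| :=
    Finset.sum_le_sum fun i _ => le_max_left _ _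
  -- nonnegativity
  have n1 : 0 ≤ ∑ i ∈ N1 \ N2, |x i - y1| := Finset.sum_nonneg fun i _ => abs_nonneg _
  have n2 : 0 ≤ ∑ i ∈ N2 \ N1, |x i - t| := Finset.sum_nonneg fun i _ => abs_nonneg _
  have n3 : 0 ≤ ∑ i ∈ N1 ∩ N2, max |x i - y1| |x i - t| :=
    Finset.sum_nonneg fun i _ => le_trans (abs_nonneg _) (le_max_left _ _)
  linarith
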